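/- If I is a Gotzmann squarefree monomial ideal of S = k[x_1,…,x_n], then for every d the family 𝒜_d = {supp(m) : m a squarefree monomial of degree d lying in I}, a family of d-element subsets of {1,…,n}, is a Gotzmann family in {1,…,n}. -/

import Mathlib

open MvPolynomial

/-- `m₁·W`: the `k`-span of `{xᵢ·w : 1 ≤ i ≤ n, w ∈ W}`. -/
noncomputable def mulVars (k : Type*) [Field k] {n : ℕ}
    (W : Submodule k (MvPolynomial (Fin n) k)) : Submodule k (MvPolynomial (Fin n) k) :=
  Submodule.span k {p : MvPolynomial (Fin n) k | ∃ i : Fin n, ∃ w ∈ W, p = X i * w}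

/-- A subspace `V ⊆ S_d` is Gotzmann if `dim m₁·V ≤ dim m₁·W` for every subspace
`W ⊆ S_d` with `dim W = dim V`. -/
def IsGotzmannSubspace (k : Type*) [Field k] (n d : ℕ)
    (V : Submodule k (MvPolynomial (Fin n) k)) : Prop :=
  V ≤ homogeneousSubmodule (Fin n) k d ∧
    ∀ W : Submodule k (MvPolynomial (Fin n) k),
      W ≤ homogeneousSubmodule (Fin n) k d →
      Module.finrank k W = Module.finrank k V →
      Module.finrank k (mulVars k V) ≤ Module.finrank k (mulVars k W)

/-- The degree-`d` component `I_d` of an ideal, as a `k`-subspace of `S_d`. -/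
noncomputable def idealComponent (k : Type*) [Field k] {n : ℕ}
    (I : Ideal (MvPolynomial (Fin n) k)) (d : ℕ) : Submodule k (MvPolynomial (Fin n) k) :=
  Submodule.restrictScalars k I ⊓ homogeneousSubmodule (Fin n) k d

/-- An ideal is Gotzmann if all of its graded components are Gotzmann subspaces. -/
def IsGotzmannIdeal {k : Type*} [Field k] {n : ℕ}
    (I : Ideal (MvPolynomial (Fin n) k)) : Prop :=
  ∀ d : ℕ, IsGotzmannSubspace k n d (idealComponent k I d)

/-- The squarefree monomial `∏_{i ∈ A} xᵢ` with support `A`. -/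
noncomputable def sqMonomial (k : Type*) [Field k] {n : ℕ} (A : Finset (Fin n)) :
    MvPolynomial (Fin n) k :=
  ∏ i ∈ A, X i

/-- A squarefree monomial ideal: an ideal generated by squarefree monomials
(equivalently, a monomial ideal whose minimal monomial generators are squarefree). -/
def IsSquarefreeMonomialIdeal {k : Type*} [Field k] {n : ℕ}
    (I : Ideal (MvPolynomial (Fin n) k)) : Prop :=
  ∃ G : Set (Finset (Fin n)), I = Ideal.span (sqMonomial k '' G)

/-- Lex comparison of exponent vectors with `x₁ > x₂ > ⋯ > xₙ`: `s` is lex-smaller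
than `t` iff at the first index where they differ, `s` has the smaller exponent. -/
def expLexLT {n : ℕ} (s t : Fin n →₀ ℕ) : Prop :=
  ∃ i : Fin n, (∀ j : Fin n, j < i → s j = t j) ∧ s i < t i

/-- A lex segment in `S_d`: the span of a set of degree-`d` monomials which is closed
under passing to lex-larger degree-`d` monomials. -/
def IsLexSegment (k : Type*) [Field k] {n : ℕ} (d : ℕ)
    (L : Submodule k (MvPolynomial (Fin n) k)) : Prop :=
  ∃ B : Set (Fin n →₀ ℕ),
    (∀ s ∈ B, (s.sum fun _ e => e) = d) ∧
    (∀ s ∈ B, ∀ t : Fin n →₀ ℕ, (t.sum fun _ e => e) = d → expLexLT s t → t ∈ B) ∧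
    L = Submodule.span k ((fun s => (monomial s (1 : k) : MvPolynomial (Fin n) k)) '' B)

/-- A monomial vector space: a subspace of `S_d` spanned by monomials of degree `d`. -/
def IsMonomialSubspace (k : Type*) [Field k] {n : ℕ} (d : ℕ)
    (V : Submodule k (MvPolynomial (Fin n) k)) : Prop :=
  ∃ B : Set (Fin n →₀ ℕ),
    (∀ s ∈ B, (s.sum fun _ e => e) = d) ∧
    V = Submodule.span k ((fun s => (monomial s (1 : k) : MvPolynomial (Fin n) k)) '' B)

/-- A homogeneous ideal: one containing all homogeneous components of its elements. -/
def IsHomogeneousIdeal {k : Type*} [Field k] {n : ℕ}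
    (I : Ideal (MvPolynomial (Fin n) k)) : Prop :=
  ∀ p ∈ I, ∀ d : ℕ, (homogeneousComponent d p) ∈ I

/-- A lex ideal: each graded component is a lex segment. -/
def IsLexIdeal (k : Type*) [Field k] {n : ℕ}
    (I : Ideal (MvPolynomial (Fin n) k)) : Prop :=
  ∀ d : ℕ, IsLexSegment k d (idealComponent k I d)

/-- `A` lex-precedes `B`, as squarefree monomials with `x₁ > x₂ > ⋯ > xₙ`: the
least element of the symmetric difference `A Δ B` lies in `A`. -/
def finsetLexLT {n : ℕ} (A B : Finset (Fin n)) : Prop :=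
  ∃ i ∈ A, i ∉ B ∧ ∀ j : Fin n, j < i → (j ∈ A ↔ j ∈ B)

/-- `L` is the squarefree lexification of `I`: `L` is a squarefree monomial ideal and,
in each degree `d`, the squarefree degree-`d` monomials in `L` form an initial segment
in lex order whose cardinality is the number of squarefree degree-`d` monomials in `I`. -/
def IsSquarefreeLexification (k : Type*) [Field k] {n : ℕ}
    (I L : Ideal (MvPolynomial (Fin n) k)) : Prop :=
  IsSquarefreeMonomialIdeal L ∧
    ∀ d : ℕ,
      (∀ B : Finset (Fin n), B.card = d → sqMonomial k B ∈ L →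
        ∀ A : Finset (Fin n), A.card = d → finsetLexLT A B → sqMonomial k A ∈ L) ∧
      {A : Finset (Fin n) | A.card = d ∧ sqMonomial k A ∈ L}.ncard
        = {A : Finset (Fin n) | A.card = d ∧ sqMonomial k A ∈ I}.ncard

/-- `A` is the support of a minimal monomial generator of the squarefree monomial
ideal `I`: the monomial `x_A` lies in `I` but no proper divisor of it does. -/
def IsMinimalSqGenerator {k : Type*} [Field k] {n : ℕ}
    (I : Ideal (MvPolynomial (Fin n) k)) (A : Finset (Fin n)) : Prop :=
  sqMonomial k A ∈ I ∧ ∀ B : Finset (Fin n), B ⊂ A → sqMonomial k B ∉ I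

/-- The upper shadow `∂⁺𝒜 = {A ∪ {x} : A ∈ 𝒜, x ∈ X \ A}` of a family of finite
sets, taken within the ground set `X`. -/
def upShadowIn {α : Type*} [DecidableEq α] (X : Finset α) (𝒜 : Set (Finset α)) :
    Set (Finset α) :=
  {B | ∃ A ∈ 𝒜, ∃ x ∈ X, x ∉ A ∧ B = insert x A}

/-- A Gotzmann family of `d`-element subsets of the ground set `X`: its upper shadow
(in `X`) is no larger than that of any other family of `d`-element subsets of `X` of
the same cardinality. -/
def IsGotzmannFamily {α : Type*} [DecidableEq α] (X : Finset α) (d : ℕ)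
    (𝒜 : Set (Finset α)) : Prop :=
  (∀ A ∈ 𝒜, A ⊆ X ∧ A.card = d) ∧
    ∀ ℬ : Set (Finset α), (∀ B ∈ ℬ, B ⊆ X ∧ B.card = d) → ℬ.ncard = 𝒜.ncard →
      (upShadowIn X 𝒜).ncard ≤ (upShadowIn X ℬ).ncard

/-- First part `𝒜₀ = {A ∈ 𝒜 : i ∉ A}` of the `i`-decomposition of `𝒜`. -/
def decompZero {α : Type*} (i : α) (𝒜 : Set (Finset α)) : Set (Finset α) :=
  {A ∈ 𝒜 | i ∉ A}

/-- Second part `𝒜₁ = {A \ {i} : A ∈ 𝒜, i ∈ A}` of the `i`-decomposition of `𝒜`. -/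
def decompOne {α : Type*} [DecidableEq α] (i : α) (𝒜 : Set (Finset α)) : Set (Finset α) :=
  {B | ∃ A ∈ 𝒜, i ∈ A ∧ B = A.erase i}

/-- `A` precedes `B` in the lex order on finite sets induced by the strict order `r`:
the `r`-least element of the symmetric difference `A Δ B` lies in `A`. -/
def lexLT {α : Type*} (r : α → α → Prop) (A B : Finset α) : Prop :=
  ∃ x ∈ A, x ∉ B ∧ ∀ y, r y x → (y ∈ A ↔ y ∈ B)

/-- `r` is a strict linear order on the elements of `Y`. -/
def IsLinearOrderOn {α : Type*} (r : α → α → Prop) (Y : Finset α) : Prop :=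
  (∀ a ∈ Y, ¬ r a a) ∧
    (∀ a ∈ Y, ∀ b ∈ Y, ∀ c ∈ Y, r a b → r b c → r a c) ∧
    (∀ a ∈ Y, ∀ b ∈ Y, a ≠ b → r a b ∨ r b a)

/-- A lex segment: a family of `e`-element subsets of `Y` that is an initial segment
of the lex order (induced by the strict order `r`) on `e`-element subsets of `Y`. -/
def IsLexSegmentFamily {α : Type*} (r : α → α → Prop) (Y : Finset α) (e : ℕ)
    (L : Set (Finset α)) : Prop :=
  (∀ B ∈ L, B ⊆ Y ∧ B.card = e) ∧
    ∀ B ∈ L, ∀ A : Finset α, A ⊆ Y → A.card = e → lexLT r A B → A ∈ L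

/-- The Alexander dual `𝒜^∨ = {X \ A : A ⊆ X, |A| = d, A ∉ 𝒜}` of a family `𝒜` of
`d`-element subsets of `X`. -/
def alexDual {α : Type*} [DecidableEq α] (X : Finset α) (d : ℕ) (𝒜 : Set (Finset α)) :
    Set (Finset α) :=
  {B | ∃ A : Finset α, A ⊆ X ∧ A.card = d ∧ A ∉ 𝒜 ∧ B = X \ A}

/-- A family of `d`-element subsets of `X` is dual-Gotzmann if its Alexander dual is
Gotzmann in `X`. -/
def IsDualGotzmann {α : Type*} [DecidableEq α] (X : Finset α) (d : ℕ)
    (𝒜 : Set (Finset α)) : Prop :=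
  IsGotzmannFamily X (X.card - d) (alexDual X d 𝒜)


/-! ### Auxiliary machinery -/

open Finset
open scoped FinsetFamily


section KKsection
attribute [-instance] instDecidableEqFin

variable {n : ℕ}

/-- Existence of colex initial segments of any permissible size. -/
lemma exists_isInitSeg (r c : ℕ) (hc : c ≤ #(powersetCard r (univ : Finset (Fin n)))) :
    ∃ 𝒞 : Finset (Finset (Fin n)), Colex.IsInitSeg 𝒞 r ∧ #𝒞 = c := by
  induction c with
  | zero => exact ⟨∅, Colex.isInitSeg_empty, rfl⟩
  | succ c ih =>
    obtain ⟨𝒞, h𝒞, hcard⟩ := ih (Nat.le_of_succ_le hc)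
    have hsub : 𝒞 ⊆ powersetCard r univ := fun s hs =>
      mem_powersetCard_univ.2 (h𝒞.1 hs)
    have hne : (powersetCard r univ \ 𝒞).Nonempty := by
      rw [sdiff_nonempty]
      intro hP
      have := card_le_card hP
      omega
    obtain ⟨m, hm, hmin⟩ := exists_min_image _ toColex hne
    rw [mem_sdiff] at hm
    refine ⟨insert m 𝒞, ⟨?_, ?_⟩, ?_⟩
    · intro s hs
      rw [coe_insert, Set.mem_insert_iff] at hs
      rcases hs with rfl | hs
      · exact (mem_powersetCard_univ.1 hm.1)
      · exact h𝒞.1 hs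
    · intro s t hs ht
      rw [mem_insert] at hs ⊢
      rcases hs with rfl | hs
      · by_cases htC : t ∈ 𝒞
        · exact Or.inr htC
        · exfalso
          have htP : t ∈ powersetCard r univ \ 𝒞 := by
            rw [mem_sdiff]
            exact ⟨mem_powersetCard_univ.2 ht.2, htC⟩
          exact absurd (hmin t htP) (not_le_of_gt ht.1)
      · exact Or.inr (h𝒞.2 hs ht)
    · rw [card_insert_of_notMem hm.2, hcard]

/-- Kruskal–Katona for upper shadows: the complement of an initial segment minimizes
the upper shadow. -/
lemma kk_up {r : ℕ} {ℬ 𝒞 : Finset (Finset (Fin n))} (hℬ : (ℬ : Set (Finset (Fin n))).Sized r)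
    (h𝒞 : Colex.IsInitSeg 𝒞 (n - r)) (hcard : #𝒞 ≤ #ℬ) :
    #(∂⁺ 𝒞ᶜˢ) ≤ #(∂⁺ ℬ) := by
  have h1 : #(∂⁺ 𝒞ᶜˢ) = #(∂ 𝒞) := by rw [upShadow_compls, card_compls]
  have h2 : #(∂⁺ ℬ) = #(∂ ℬᶜˢ) := by rw [shadow_compls, card_compls]
  have hsz := hℬ.compls
  rw [Fintype.card_fin] at hsz
  rw [h1, h2]
  exact kruskal_katona hsz (by rwa [card_compls]) h𝒞

lemma upShadow_empty_of_big {e : ℕ} {U : Finset (Finset (Fin n))}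
    (hU : (U : Set (Finset (Fin n))).Sized e) (he : n ≤ e) : ∂⁺ U = ∅ := by
  rw [eq_empty_iff_forall_notMem]
  intro t ht
  have := hU.upShadow ht
  have h2 : #t ≤ n := by
    simpa using card_le_card (subset_univ t)
  omega

/-- The master chain construction: a stratified "upper-lex" family with prescribed
stratum sizes, closed under upper shadows, minimizing the upper shadow in top degree. -/
lemma exists_upchain (d : ℕ) (D : Finset (Finset (Fin n)))
    (hup : ∀ S ∈ D, ∀ T : Finset (Fin n), S ⊆ T → #T = #S + 1 → #T ≤ d → T ∈ D) :
    ∃ U : ℕ → Finset (Finset (Fin n)),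
      (∀ e, (U e : Set (Finset (Fin n))).Sized e) ∧
      (∀ e, #(U e) = #(D.filter fun S => #S = e)) ∧
      (∀ e, e < d → ∀ S ∈ U e, ∀ T : Finset (Fin n), S ⊆ T → #T = #S + 1 → T ∈ U (e + 1)) ∧
      (∀ ℬ : Finset (Finset (Fin n)), (ℬ : Set (Finset (Fin n))).Sized d →
        #(U d) ≤ #ℬ → #(∂⁺ (U d)) ≤ #(∂⁺ ℬ)) := by
  classical
  have hstrat : ∀ e, (D.filter fun S => #S = e) ⊆ powersetCard e univ := by
    intro e S hS
    rw [mem_filter] at hS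
    exact mem_powersetCard_univ.2 hS.2
  have hempty : ∀ e, n < e → (D.filter fun S => #S = e) = ∅ := by
    intro e he
    rw [eq_empty_iff_forall_notMem]
    intro S hS
    rw [mem_filter] at hS
    have : #S ≤ n := by simpa using card_le_card (subset_univ S)
    omega
  have hcle : ∀ e, #(D.filter fun S => #S = e)
      ≤ #(powersetCard (n - e) (univ : Finset (Fin n))) := by
    intro e
    rcases le_or_gt e n with he | he
    · calc #(D.filter fun S => #S = e) ≤ #(powersetCard e (univ : Finset (Fin n))) :=
          card_le_card (hstrat e)
        _ = n.choose e := by rw [card_powersetCard, card_univ, Fintype.card_fin]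
        _ = n.choose (n - e) := (Nat.choose_symm he).symm
        _ = #(powersetCard (n - e) (univ : Finset (Fin n))) := by
            rw [card_powersetCard, card_univ, Fintype.card_fin]
    · simp [hempty e he]
  choose 𝒞 h𝒞init h𝒞card using fun e =>
    exists_isInitSeg (n := n) (n - e) (#(D.filter fun S => #S = e)) (hcle e)
  have hsized : ∀ e, (((𝒞 e)ᶜˢ : Finset (Finset (Fin n))) : Set (Finset (Fin n))).Sized e := by
    intro e s hs
    rw [mem_coe, mem_compls] at hs
    rcases le_or_gt e n with he | he
    · have h1 := (h𝒞init e).1 (mem_coe.2 hs)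
      have h2 : #sᶜᶜ = #s := by rw [compl_compl]
      rw [card_compl, Fintype.card_fin, h1] at h2
      omega
    · exfalso
      have : 𝒞 e = ∅ := card_eq_zero.1 (by rw [h𝒞card, hempty e he, card_empty])
      rw [this] at hs
      exact notMem_empty _ hs
  refine ⟨fun e => (𝒞 e)ᶜˢ, hsized, ?_, ?_, ?_⟩
  · intro e
    rw [card_compls, h𝒞card]
  · intro e he
    rcases lt_or_ge e n with hen | hen
    · have hshadow_init : Colex.IsInitSeg (∂ (𝒞 e)) (n - (e + 1)) := by
        have := (h𝒞init e).shadow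
        rwa [Nat.sub_sub] at this
      have hcard_le : #(∂ (𝒞 e)) ≤ #(𝒞 (e + 1)) := by
        have h1 : #(∂ (𝒞 e)) = #(∂⁺ (𝒞 e)ᶜˢ) := by rw [upShadow_compls, card_compls]
        have h2 : #(∂⁺ (𝒞 e)ᶜˢ) ≤ #(∂⁺ (D.filter fun S => #S = e)) := by
          apply kk_up _ (h𝒞init e)
          · rw [h𝒞card]
          · intro S hS
            rw [mem_coe, mem_filter] at hS
            exact hS.2
        have h3 : ∂⁺ (D.filter fun S => #S = e) ⊆ (D.filter fun S => #S = (e+1)) := by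
          intro t ht
          rw [mem_upShadow_iff] at ht
          obtain ⟨s, hs, a, ha, rfl⟩ := ht
          rw [mem_filter] at hs
          rw [mem_filter, card_insert_of_notMem ha, hs.2]
          refine ⟨hup s hs.1 _ (subset_insert a s) ?_ ?_, rfl⟩
          · rw [card_insert_of_notMem ha]
          · rw [card_insert_of_notMem ha, hs.2]
            omega
        have h4 := card_le_card h3
        rw [h𝒞card (e+1)]
        omega
      have htot := (hshadow_init).total (h𝒞init (e + 1))
      have hsub : ∂ (𝒞 e) ⊆ 𝒞 (e + 1) := by
        rcases htot with h | h
        · exact h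
        · exact (eq_of_subset_of_card_le h hcard_le).ge
      intro S hS T hST hcardT
      have hT : T ∈ ∂⁺ ((𝒞 e)ᶜˢ) := by
        rw [mem_upShadow_iff_exists_sdiff]
        refine ⟨S, hS, hST, ?_⟩
        rw [card_sdiff_of_subset hST, hcardT]
        omega
      rw [upShadow_compls, mem_compls] at hT
      rw [mem_compls]
      exact hsub hT
    · intro S hS T hST hcardT
      exfalso
      have h1 := hsized e (mem_coe.2 hS)
      have h2 : #T ≤ n := by simpa using card_le_card (subset_univ T)
      omega
  · intro ℬ hℬ hcardle
    apply kk_up hℬ (h𝒞init d)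
    rw [card_compls, h𝒞card] at hcardle
    rw [h𝒞card]
    exact hcardle

end KKsection

lemma upShadow_inst_eq {α : Type*} (i1 i2 : DecidableEq α) :
    (@Finset.upShadow α i1) = (@Finset.upShadow α i2) :=
  congrArg _ (Subsingleton.elim i1 i2)


section Counting

variable {n : ℕ}

/-- Total degree of an exponent vector. -/
def degS (t : Fin n →₀ ℕ) : ℕ := t.sum fun _ e => e

lemma degS_eq (t : Fin n →₀ ℕ) : degS t = ∑ i ∈ t.support, t i := rfl

lemma degS_add (a b : Fin n →₀ ℕ) : degS (a + b) = degS a + degS b :=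
  Finsupp.sum_add_index' (fun _ => rfl) (fun _ _ _ => rfl)

lemma degS_single (i : Fin n) (m : ℕ) : degS (Finsupp.single i m) = m :=
  Finsupp.sum_single_index rfl

lemma card_support_le_degS (t : Fin n →₀ ℕ) : #t.support ≤ degS t := by
  rw [degS_eq, card_eq_sum_ones]
  exact Finset.sum_le_sum fun i hi => Nat.one_le_iff_ne_zero.2 (Finsupp.mem_support_iff.1 hi)

lemma apply_eq_one_of_degS_eq_card {t : Fin n →₀ ℕ} (h : degS t = #t.support) :
    ∀ j ∈ t.support, t j = 1 := by
  intro j hj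
  by_contra hne
  have h2 : 2 ≤ t j := by
    have := Finsupp.mem_support_iff.1 hj
    omega
  have hlt : #t.support < degS t := by
    rw [degS_eq, card_eq_sum_ones]
    exact Finset.sum_lt_sum (fun i hi => Nat.one_le_iff_ne_zero.2 (Finsupp.mem_support_iff.1 hi))
      ⟨j, hj, by omega⟩
  omega

/-- The indicator exponent vector of a set. -/
noncomputable def indicF (A : Finset (Fin n)) : Fin n →₀ ℕ := ∑ i ∈ A, Finsupp.single i 1

lemma indicF_apply (A : Finset (Fin n)) (j : Fin n) :
    indicF A j = if j ∈ A then 1 else 0 := by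
  rw [indicF, Finset.sum_apply']
  simp_rw [Finsupp.single_apply]
  rw [Finset.sum_ite_eq' A j (fun _ => 1)]

lemma support_indicF (A : Finset (Fin n)) : (indicF A).support = A := by
  ext j
  rw [Finsupp.mem_support_iff, indicF_apply]
  split <;> simp_all

lemma degS_indicF (A : Finset (Fin n)) : degS (indicF A) = #A := by
  rw [degS_eq, support_indicF]
  rw [Finset.card_eq_sum_ones]
  exact Finset.sum_congr rfl fun i hi => by rw [indicF_apply, if_pos hi]

lemma eq_indicF_of_degS_eq_card {t : Fin n →₀ ℕ} (h : degS t = #t.support) :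
    t = indicF t.support := by
  ext j
  rw [indicF_apply]
  by_cases hj : j ∈ t.support
  · rw [if_pos hj]; exact apply_eq_one_of_degS_eq_card h j hj
  · rw [if_neg hj]; exact Finsupp.notMem_support_iff.1 hj

lemma indicF_le_iff (A : Finset (Fin n)) (t : Fin n →₀ ℕ) :
    indicF A ≤ t ↔ A ⊆ t.support := by
  rw [Finsupp.le_def]
  constructor
  · intro h i hi
    rw [Finsupp.mem_support_iff]
    have := h i
    rw [indicF_apply, if_pos hi] at this
    omega
  · intro h i
    rw [indicF_apply]
    split
    · next hi => exact Nat.one_le_iff_ne_zero.2 (Finsupp.mem_support_iff.1 (h hi))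
    · exact Nat.zero_le _

lemma indicF_insert {A : Finset (Fin n)} {i : Fin n} (hi : i ∉ A) :
    indicF (insert i A) = Finsupp.single i 1 + indicF A := by
  rw [indicF, Finset.sum_insert hi, indicF]

/-- The finset of degree-`m` exponent vectors with support in the family `D`. -/
noncomputable def monF (D : Finset (Finset (Fin n))) (m : ℕ) : Finset (Fin n →₀ ℕ) :=
  (Finset.finsuppAntidiag Finset.univ m).filter (fun t => t.support ∈ D)

lemma mem_monF {D : Finset (Finset (Fin n))} {m : ℕ} {t : Fin n →₀ ℕ} :
    t ∈ monF D m ↔ degS t = m ∧ t.support ∈ D := by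
  rw [monF, mem_filter, Finset.mem_finsuppAntidiag']
  constructor
  · exact fun h => ⟨h.1.1, h.2⟩
  · exact fun h => ⟨⟨h.1, subset_univ _⟩, h.2⟩

lemma fiber_card_eq (m : ℕ) {S S' : Finset (Fin n)} (h : #S = #S') :
    #((Finset.finsuppAntidiag Finset.univ m).filter fun t => t.support = S)
      = #((Finset.finsuppAntidiag Finset.univ m).filter fun t => t.support = S') := by
  classical
  have e : {x // x ∈ S} ≃ {x // x ∈ S'} := Fintype.equivOfCardEq (by simp [h])
  set π : Equiv.Perm (Fin n) := e.extendSubtype with hπdef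
  have hπ : ∀ x ∈ S, π x ∈ S' := fun x hx => e.extendSubtype_mem x hx
  have himg : S.image π = S' := by
    apply Finset.eq_of_subset_of_card_le
    · intro y hy
      rw [Finset.mem_image] at hy
      obtain ⟨x, hx, rfl⟩ := hy
      exact hπ x hx
    · rw [Finset.card_image_of_injective _ π.injective, h]
  have hsupp : ∀ (σ : Equiv.Perm (Fin n)) (t : Fin n →₀ ℕ),
      (Finsupp.equivMapDomain σ t).support = t.support.image σ := by
    intro σ t
    ext a
    rw [Finsupp.mem_support_iff, Finsupp.equivMapDomain_apply, Finset.mem_image]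
    constructor
    · intro ha
      exact ⟨σ.symm a, Finsupp.mem_support_iff.2 ha, σ.apply_symm_apply a⟩
    · rintro ⟨b, hb, rfl⟩
      rw [σ.symm_apply_apply]
      exact Finsupp.mem_support_iff.1 hb
  have hdeg : ∀ t : Fin n →₀ ℕ, degS (Finsupp.equivMapDomain π t) = degS t := fun t =>
    Finsupp.sum_equivMapDomain π t _
  apply Finset.card_bij (fun t _ => Finsupp.equivMapDomain π t)
  · intro t ht
    rw [mem_filter, Finset.mem_finsuppAntidiag'] at ht ⊢
    refine ⟨⟨?_, subset_univ _⟩, ?_⟩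
    · rw [show (Finsupp.equivMapDomain π t).sum (fun _ x => x) = degS (Finsupp.equivMapDomain π t) from rfl, hdeg]
      exact ht.1.1
    · rw [hsupp, ht.2, himg]
  · intro t₁ h₁ t₂ h₂ heq
    have := congrArg (Finsupp.equivMapDomain π.symm) heq
    rwa [← Finsupp.equivMapDomain_trans, ← Finsupp.equivMapDomain_trans,
      Equiv.self_trans_symm, Finsupp.equivMapDomain_refl, Finsupp.equivMapDomain_refl] at this
  · intro u hu
    refine ⟨Finsupp.equivMapDomain π.symm u, ?_, ?_⟩
    · rw [mem_filter, Finset.mem_finsuppAntidiag'] at hu ⊢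
      refine ⟨⟨?_, subset_univ _⟩, ?_⟩
      · rw [show (Finsupp.equivMapDomain π.symm u).sum (fun _ x => x)
            = degS (Finsupp.equivMapDomain π.symm u) from rfl]
        rw [show degS (Finsupp.equivMapDomain π.symm u) = degS u from
          Finsupp.sum_equivMapDomain π.symm u _]
        exact hu.1.1
      · rw [hsupp π.symm, hu.2, ← himg, Finset.image_image]
        simp
    · rw [← Finsupp.equivMapDomain_trans, Equiv.symm_trans_self, Finsupp.equivMapDomain_refl]

lemma monF_card_eq (m : ℕ) (D D' : Finset (Finset (Fin n)))
    (h : ∀ e, #(D.filter fun S => #S = e) = #(D'.filter fun S => #S = e)) :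
    #(monF D m) = #(monF D' m) := by
  classical
  have key : ∀ E : Finset (Finset (Fin n)), #(monF E m)
      = ∑ S ∈ E, #((Finset.finsuppAntidiag Finset.univ m).filter fun t => t.support = S) := by
    intro E
    have hdecomp : monF E m
        = E.biUnion (fun S => (Finset.finsuppAntidiag Finset.univ m).filter
            fun t => t.support = S) := by
      ext t
      rw [mem_monF, mem_biUnion]
      constructor
      · intro ht
        refine ⟨t.support, ht.2, ?_⟩
        rw [mem_filter, Finset.mem_finsuppAntidiag']
        exact ⟨⟨ht.1, subset_univ _⟩, rfl⟩
      · rintro ⟨S, hS, ht⟩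
        rw [mem_filter, Finset.mem_finsuppAntidiag'] at ht
        exact ⟨ht.1.1, ht.2 ▸ hS⟩
    rw [hdecomp, card_biUnion]
    intro S hS S' hS' hne
    rw [Function.onFun_apply, Finset.disjoint_left]
    intro t ht ht'
    rw [mem_filter] at ht ht'
    exact hne (ht.2 ▸ ht'.2)
  rw [key, key]
  set f : Finset (Fin n) → ℕ :=
    fun S => #((Finset.finsuppAntidiag Finset.univ m).filter fun t => t.support = S) with hf
  set F : ℕ → ℕ := fun e => if h : ∃ S : Finset (Fin n), #S = e then f h.choose else 0 with hF
  have hfF : ∀ S : Finset (Fin n), f S = F (#S) := by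
    intro S
    have hex : ∃ T : Finset (Fin n), #T = #S := ⟨S, rfl⟩
    simp only [hF]
    rw [dif_pos hex]
    simp only [hf]
    exact fiber_card_eq m hex.choose_spec.symm
  have sumtr : ∀ E : Finset (Finset (Fin n)),
      ∑ S ∈ E, f S = ∑ e ∈ range (n + 2), #(E.filter fun S => #S = e) * F e := by
    intro E
    have hmaps : ∀ S ∈ E, #S ∈ range (n + 2) := by
      intro S _
      rw [mem_range]
      have : #S ≤ n := by simpa using card_le_card (subset_univ S)
      omega
    rw [← Finset.sum_fiberwise_of_maps_to hmaps f]
    apply Finset.sum_congr rfl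
    intro e _
    have hconst : ∀ S ∈ E.filter (fun S => #S = e), f S = F e := by
      intro S hS
      rw [hfF, (mem_filter.1 hS).2]
    rw [Finset.sum_congr rfl hconst, Finset.sum_const, smul_eq_mul]
  rw [sumtr, sumtr]
  exact Finset.sum_congr rfl fun e _ => by rw [h e]


/-- The multiplied exponent set: all `e_i + s` for `s ∈ B`. -/
noncomputable def shF (B : Finset (Fin n →₀ ℕ)) : Finset (Fin n →₀ ℕ) :=
  (Finset.univ ×ˢ B).image (fun p => Finsupp.single p.1 1 + p.2)

lemma mem_shF {B : Finset (Fin n →₀ ℕ)} {t : Fin n →₀ ℕ} :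
    t ∈ shF B ↔ ∃ i : Fin n, ∃ s ∈ B, t = Finsupp.single i 1 + s := by
  rw [shF, Finset.mem_image]
  constructor
  · rintro ⟨⟨i, s⟩, hp, rfl⟩
    exact ⟨i, s, (Finset.mem_product.1 hp).2, rfl⟩
  · rintro ⟨i, s, hs, rfl⟩
    exact ⟨(i, s), Finset.mem_product.2 ⟨Finset.mem_univ _, hs⟩, rfl⟩

lemma support_single_add (i : Fin n) (s : Fin n →₀ ℕ) :
    (Finsupp.single i 1 + s).support = insert i s.support := by
  ext j
  rw [Finsupp.mem_support_iff, Finsupp.add_apply, Finsupp.single_apply, Finset.mem_insert,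
    Finsupp.mem_support_iff]
  by_cases hj : i = j
  · subst hj; simp
  · simp [hj, Ne.symm hj]

lemma exists_split {t : Fin n →₀ ℕ} {i : Fin n} (h : 1 ≤ t i) :
    ∃ s : Fin n →₀ ℕ, t = Finsupp.single i 1 + s ∧ degS t = degS s + 1 ∧
      (2 ≤ t i → s.support = t.support) ∧ (t i = 1 → s.support = t.support.erase i) := by
  set s : Fin n →₀ ℕ := t - Finsupp.single i 1 with hs
  have happ : ∀ j, s j = t j - (if i = j then 1 else 0) := by
    intro j
    rw [hs, Finsupp.tsub_apply, Finsupp.single_apply]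
  have happi : s i = t i - 1 := by
    rw [happ i, if_pos rfl]
  have happne : ∀ j, i ≠ j → s j = t j := by
    intro j hj
    rw [happ j, if_neg hj]
    omega
  have heq : t = Finsupp.single i 1 + s := by
    ext j
    rw [Finsupp.add_apply, Finsupp.single_apply]
    by_cases hj : i = j
    · subst hj
      rw [if_pos rfl, happi]
      omega
    · rw [if_neg hj, happne j hj]
      omega
  have hdeg : degS t = degS s + 1 := by
    rw [heq, degS_add, degS_single]
    omega
  refine ⟨s, heq, hdeg, ?_, ?_⟩
  · intro h2
    ext j
    rw [Finsupp.mem_support_iff, Finsupp.mem_support_iff]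
    by_cases hj : i = j
    · subst hj
      rw [happi]
      omega
    · rw [happne j hj]
  · intro h1
    ext j
    rw [Finsupp.mem_support_iff, Finset.mem_erase, Finsupp.mem_support_iff]
    by_cases hj : i = j
    · subst hj
      rw [happi]
      omega
    · rw [happne j hj]
      constructor
      · intro hne
        exact ⟨fun hc => hj hc.symm, hne⟩
      · intro hc
        exact hc.2

lemma shF_monF_eq (d : ℕ) (D : Finset (Finset (Fin n)))
    (hD : ∀ S ∈ D, #S ≤ d)
    (hup : ∀ S ∈ D, ∀ i, i ∉ S → #S < d → insert i S ∈ D) :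
    shF (monF D d) = monF D (d + 1)
      ∪ ((Finset.finsuppAntidiag Finset.univ (d + 1)).filter
          (fun t => t.support ∈ ∂⁺ (D.filter fun S => #S = d))) := by
  have hstrat : ∀ S ∈ D.filter (fun S => #S = d), #S = d := fun S hS => (mem_filter.1 hS).2
  ext t
  rw [Finset.mem_union, mem_monF, mem_shF, mem_filter, Finset.mem_finsuppAntidiag']
  constructor
  · rintro ⟨i, s, hs, rfl⟩
    rw [mem_monF] at hs
    have hdeg : degS (Finsupp.single i 1 + s) = d + 1 := by
      rw [degS_add, degS_single, hs.1]
      omega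
    have hsupp := support_single_add i s
    by_cases hi : i ∈ s.support
    · left
      rw [hdeg, hsupp, Finset.insert_eq_self.2 hi]
      exact ⟨rfl, hs.2⟩
    · rcases lt_or_eq_of_le (le_trans (card_support_le_degS s) (le_of_eq hs.1)) with hlt | heqd
      · left
        rw [hdeg, hsupp]
        exact ⟨rfl, hup _ hs.2 i hi hlt⟩
      · right
        refine ⟨⟨?_, subset_univ _⟩, ?_⟩
        · exact hdeg
        · rw [hsupp]
          apply insert_mem_upShadow _ hi
          rw [mem_filter]
          exact ⟨hs.2, heqd.symm ▸ (rfl : #s.support = #s.support)⟩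
  · rintro (⟨hdeg, hmem⟩ | ⟨⟨hdeg, _⟩, hsh⟩)
    · -- non-squarefree part: some exponent is ≥ 2
      have hcard : #t.support ≤ d := hD _ hmem
      have hex : ∃ i, 2 ≤ t i := by
        by_contra hcon
        push_neg at hcon
        have : degS t ≤ #t.support := by
          rw [degS_eq, card_eq_sum_ones]
          apply Finset.sum_le_sum
          intro i hi
          have := hcon i
          omega
        omega
      obtain ⟨i, hi⟩ := hex
      obtain ⟨s, heq, hdegs, hsupp2, _⟩ := exists_split (by omega : 1 ≤ t i)
      refine ⟨i, s, ?_, heq⟩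
      rw [mem_monF, hsupp2 hi]
      constructor
      · omega
      · exact hmem
    · -- squarefree part
      have hdeg' : degS t = d + 1 := hdeg
      have hcard : #t.support = d + 1 := by
        have := Set.Sized.upShadow (fun S hS => hstrat S hS) hsh
        exact this
      have hones : ∀ j ∈ t.support, t j = 1 :=
        apply_eq_one_of_degS_eq_card (by omega)
      obtain ⟨a, ha, hea⟩ := mem_upShadow_iff_erase_mem.1 hsh
      obtain ⟨s, heq, hdegs, _, hsupp1⟩ := exists_split (le_of_eq (hones a ha).symm)
      refine ⟨a, s, ?_, heq⟩
      rw [mem_monF, hsupp1 (hones a ha)]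
      exact ⟨by omega, (mem_filter.1 hea).1⟩

lemma sq_card_eq (d : ℕ) (𝒜 : Finset (Finset (Fin n))) (h𝒜 : ∀ S ∈ 𝒜, #S = d) :
    #((Finset.finsuppAntidiag Finset.univ (d + 1)).filter (fun t => t.support ∈ ∂⁺ 𝒜))
      = #(∂⁺ 𝒜) := by
  have hsized : ∀ T ∈ ∂⁺ 𝒜, #T = d + 1 :=
    fun T hT => Set.Sized.upShadow (fun S hS => h𝒜 S hS) hT
  apply Finset.card_bij (fun t _ => t.support)
  · intro t ht
    exact (mem_filter.1 ht).2
  · intro t₁ h₁ t₂ h₂ heq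
    rw [mem_filter, Finset.mem_finsuppAntidiag'] at h₁ h₂
    have e₁ : t₁ = indicF t₁.support :=
      eq_indicF_of_degS_eq_card (by rw [show degS t₁ = d + 1 from h₁.1.1, hsized _ h₁.2])
    have e₂ : t₂ = indicF t₂.support :=
      eq_indicF_of_degS_eq_card (by rw [show degS t₂ = d + 1 from h₂.1.1, hsized _ h₂.2])
    rw [e₁, e₂, heq]
  · intro T hT
    refine ⟨indicF T, ?_, support_indicF T⟩
    rw [mem_filter, Finset.mem_finsuppAntidiag']
    refine ⟨⟨?_, subset_univ _⟩, ?_⟩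
    · rw [show (indicF T).sum (fun _ x => x) = degS (indicF T) from rfl, degS_indicF, hsized T hT]
    · rw [support_indicF]
      exact hT

lemma shF_card (d : ℕ) (D : Finset (Finset (Fin n)))
    (hD : ∀ S ∈ D, #S ≤ d)
    (hup : ∀ S ∈ D, ∀ i, i ∉ S → #S < d → insert i S ∈ D) :
    #(shF (monF D d)) = #(monF D (d + 1)) + #(∂⁺ (D.filter fun S => #S = d)) := by
  rw [shF_monF_eq d D hD hup, Finset.card_union_of_disjoint, sq_card_eq d _ (fun S hS => (mem_filter.1 hS).2)]
  rw [Finset.disjoint_left]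
  intro t ht ht'
  rw [mem_monF] at ht
  rw [mem_filter] at ht'
  have h1 : #t.support ≤ d := hD _ ht.2
  have h2 : #t.support = d + 1 :=
    Set.Sized.upShadow (fun S hS => (mem_filter.1 hS).2) ht'.2
  omega


end Counting

section Algebra

variable {k : Type*} [Field k] {n : ℕ}

lemma sqMonomial_eq_monomial (A : Finset (Fin n)) :
    sqMonomial k A = monomial (indicF A) 1 := by
  classical
  induction A using Finset.induction_on with
  | empty =>
      rw [sqMonomial, Finset.prod_empty, indicF, Finset.sum_empty, monomial_zero', C_1]
  | @insert a A ha ih =>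
      rw [sqMonomial, Finset.prod_insert ha, ← sqMonomial, ih, indicF_insert ha,
        monomial_single_add, pow_one]

lemma finrank_span_monomial_image (B : Finset (Fin n →₀ ℕ)) :
    Module.finrank k (Submodule.span k ((fun s => monomial s (1 : k)) '' (↑B : Set (Fin n →₀ ℕ)))) = #B := by
  classical
  have hb := (basisMonomials (Fin n) k).linearIndependent
  have hli : LinearIndependent k
      (fun x : ↥(↑B : Set (Fin n →₀ ℕ)) => basisMonomials (Fin n) k x.val) :=
    hb.comp Subtype.val Subtype.val_injective
  have himg : (fun s => monomial s (1 : k)) '' ↑B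
      = Set.range (fun x : ↥(↑B : Set (Fin n →₀ ℕ)) => basisMonomials (Fin n) k x.val) := by
    rw [show (fun x : ↥(↑B : Set (Fin n →₀ ℕ)) => basisMonomials (Fin n) k x.val)
        = ⇑(basisMonomials (Fin n) k) ∘ Subtype.val from rfl]
    rw [Set.range_comp, Subtype.range_coe, coe_basisMonomials]
  rw [himg, finrank_span_eq_card hli]
  simp

lemma mulVars_span_monomial (B : Finset (Fin n →₀ ℕ)) :
    mulVars k (Submodule.span k ((fun s => monomial s (1 : k)) '' (↑B : Set (Fin n →₀ ℕ))))
      = Submodule.span k ((fun s => monomial s (1 : k)) '' ((↑(shF B) : Set (Fin n →₀ ℕ)))) := by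
  apply le_antisymm
  · rw [mulVars, Submodule.span_le]
    rintro p ⟨i, w, hw, rfl⟩
    have goalmem : X i * w ∈ Submodule.span k ((fun s => monomial s (1 : k)) '' ((↑(shF B) : Set (Fin n →₀ ℕ)))) := by
      refine Submodule.span_induction ?_ ?_ ?_ ?_ hw
      · rintro x ⟨s, hs, rfl⟩
        apply Submodule.subset_span
        refine ⟨Finsupp.single i 1 + s, ?_, ?_⟩
        · rw [mem_coe, mem_shF]
          exact ⟨i, s, hs, rfl⟩
        · simp only [monomial_single_add, pow_one]
      · rw [mul_zero]
        exact Submodule.zero_mem _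
      · intro x y _ _ hx hy
        rw [mul_add]
        exact Submodule.add_mem _ hx hy
      · intro c x _ hx
        rw [mul_smul_comm]
        exact Submodule.smul_mem _ c hx
    exact goalmem
  · rw [Submodule.span_le]
    rintro p ⟨u, hu, rfl⟩
    rw [mem_coe, mem_shF] at hu
    obtain ⟨i, s, hs, rfl⟩ := hu
    apply Submodule.subset_span
    refine ⟨i, monomial s 1, Submodule.subset_span ⟨s, hs, rfl⟩, ?_⟩
    simp only [monomial_single_add, pow_one]

lemma monomial_mem_iff {I : Ideal (MvPolynomial (Fin n) k)} {G : Set (Finset (Fin n))}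
    (hI : I = Ideal.span (sqMonomial k '' G)) (t : Fin n →₀ ℕ) :
    monomial t (1 : k) ∈ I ↔ ∃ B ∈ G, B ⊆ t.support := by
  classical
  have hspan : I = Ideal.span ((fun s => monomial s (1 : k)) '' (indicF '' G)) := by
    rw [hI, Set.image_image]
    congr 1
    exact Set.image_congr fun A _ => (sqMonomial_eq_monomial A)
  rw [hspan, mem_ideal_span_monomial_image]
  have hsupp : (monomial t (1 : k)).support = {t} := by
    rw [support_monomial, if_neg one_ne_zero]
  rw [hsupp]
  constructor
  · intro h
    obtain ⟨si, hsi, hle⟩ := h t (Finset.mem_singleton_self t)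
    obtain ⟨B, hB, rfl⟩ := hsi
    exact ⟨B, hB, (indicF_le_iff B t).1 hle⟩
  · rintro ⟨B, hB, hsub⟩ xi hxi
    rw [Finset.mem_singleton] at hxi
    subst hxi
    exact ⟨indicF B, ⟨B, hB, rfl⟩, (indicF_le_iff B xi).2 hsub⟩

lemma sqMonomial_mem_iff {I : Ideal (MvPolynomial (Fin n) k)} {G : Set (Finset (Fin n))}
    (hI : I = Ideal.span (sqMonomial k '' G)) (A : Finset (Fin n)) :
    sqMonomial k A ∈ I ↔ ∃ B ∈ G, B ⊆ A := by
  rw [sqMonomial_eq_monomial, monomial_mem_iff hI, support_indicF]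

lemma idealComponent_eq_span {I : Ideal (MvPolynomial (Fin n) k)} {G : Set (Finset (Fin n))}
    (hI : I = Ideal.span (sqMonomial k '' G)) (d : ℕ)
    (D : Finset (Finset (Fin n))) (hD : ∀ S, S ∈ D ↔ #S ≤ d ∧ sqMonomial k S ∈ I) :
    idealComponent k I d = Submodule.span k ((fun s => monomial s (1 : k)) '' ((↑(monF D d) : Set (Fin n →₀ ℕ)))) := by
  have key : ∀ t : Fin n →₀ ℕ, (monomial t (1 : k) ∈ I ↔ sqMonomial k t.support ∈ I) := by
    intro t
    rw [monomial_mem_iff hI, sqMonomial_mem_iff hI]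
  apply le_antisymm
  · intro p hp
    rw [idealComponent, Submodule.mem_inf] at hp
    obtain ⟨hpI, hph⟩ := hp
    rw [Submodule.restrictScalars_mem] at hpI
    have hhom : MvPolynomial.IsHomogeneous p d := (mem_homogeneousSubmodule d p).1 hph
    rw [MvPolynomial.as_sum p]
    apply Submodule.sum_mem
    intro t ht
    have hco : coeff t p ≠ 0 := MvPolynomial.mem_support_iff.1 ht
    have hdeg : degS t = d := by
      have := hhom hco
      rw [show degS t = Finsupp.degree t from rfl, Finsupp.degree_eq_weight_one]
      exact this
    have hmon : monomial t (1 : k) ∈ I := by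
      rw [monomial_mem_iff hI]
      have hspan : I = Ideal.span ((fun s => monomial s (1 : k)) '' (indicF '' G)) := by
        rw [hI, Set.image_image]
        congr 1
        exact Set.image_congr fun A _ => (sqMonomial_eq_monomial A)
      rw [hspan, mem_ideal_span_monomial_image] at hpI
      obtain ⟨si, hsi, hle⟩ := hpI t ht
      obtain ⟨B, hB, rfl⟩ := hsi
      exact ⟨B, hB, (indicF_le_iff B t).1 hle⟩
    have htD : t ∈ monF D d := by
      rw [mem_monF]
      refine ⟨hdeg, (hD _).2 ⟨?_, ?_⟩⟩
      · rw [← hdeg]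
        exact card_support_le_degS t
      · exact (key t).1 hmon
    have : monomial t (coeff t p) = (coeff t p) • monomial t (1 : k) := by
      rw [MvPolynomial.smul_monomial, smul_eq_mul, mul_one]
    rw [this]
    exact Submodule.smul_mem _ _ (Submodule.subset_span ⟨t, htD, rfl⟩)
  · rw [Submodule.span_le]
    rintro q ⟨t, ht, rfl⟩
    rw [mem_coe, mem_monF] at ht
    rw [SetLike.mem_coe, idealComponent, Submodule.mem_inf, Submodule.restrictScalars_mem]
    constructor
    · rw [key t]
      exact ((hD _).1 ht.2).2
    · rw [mem_homogeneousSubmodule]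
      apply isHomogeneous_monomial
      exact ht.1

end Algebra

/-- **Proposition.** If `I` is a Gotzmann squarefree monomial ideal of
`S = k[x₁,…,xₙ]`, then for every `d` the family of supports of the squarefree
degree-`d` monomials lying in `I` is a Gotzmann family of `d`-element subsets of
`{1,…,n}`. -/
theorem gotzmann_ideal_gives_gotzmann_family {k : Type*} [Field k] {n : ℕ}
    (I : Ideal (MvPolynomial (Fin n) k))
    (hsf : IsSquarefreeMonomialIdeal I) (hG : IsGotzmannIdeal I) (d : ℕ) :
    IsGotzmannFamily (Finset.univ : Finset (Fin n)) d
      {A : Finset (Fin n) | A.card = d ∧ sqMonomial k A ∈ I} := by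
  classical
  obtain ⟨G, hI⟩ := hsf
  refine ⟨fun A hA => ⟨Finset.subset_univ A, hA.1⟩, ?_⟩
  intro ℬ hℬ hcardℬ
  -- the support family of `I` in degrees `≤ d`
  set D : Finset (Finset (Fin n)) :=
    (Set.toFinite {S : Finset (Fin n) | #S ≤ d ∧ sqMonomial k S ∈ I}).toFinset with hDdef
  have hmemD : ∀ S : Finset (Fin n), S ∈ D ↔ #S ≤ d ∧ sqMonomial k S ∈ I := by
    intro S
    rw [hDdef, Set.Finite.mem_toFinset]
    rfl
  have hDle : ∀ S ∈ D, #S ≤ d := fun S hS => ((hmemD S).1 hS).1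
  have hDup : ∀ S ∈ D, ∀ T : Finset (Fin n), S ⊆ T → #T = #S + 1 → #T ≤ d → T ∈ D := by
    intro S hS T hST hcT hTd
    obtain ⟨i, hiT, hiS⟩ : ∃ i ∈ T, i ∉ S := by
      by_contra hcon
      push_neg at hcon
      have := card_le_card hcon
      omega
    have hTeq : T = insert i S := by
      refine (Finset.eq_of_subset_of_card_le ?_ ?_).symm
      · exact Finset.insert_subset hiT hST
      · rw [card_insert_of_notMem hiS, hcT]
    rw [hmemD, hTeq]
    refine ⟨hTeq ▸ hTd, ?_⟩
    have : sqMonomial k (insert i S) = X i * sqMonomial k S := by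
      rw [sqMonomial, Finset.prod_insert hiS, sqMonomial]
    rw [this]
    exact Ideal.mul_mem_left I _ ((hmemD S).1 hS).2
  -- the degree-`d` stratum is the family in question
  set 𝒜F : Finset (Finset (Fin n)) := D.filter (fun S => #S = d) with h𝒜Fdef
  have h𝒜coe : (↑𝒜F : Set (Finset (Fin n)))
      = {A : Finset (Fin n) | A.card = d ∧ sqMonomial k A ∈ I} := by
    ext A
    rw [mem_coe, h𝒜Fdef, mem_filter, hmemD, Set.mem_setOf_eq]
    constructor
    · rintro ⟨⟨_, hAI⟩, hAd⟩
      exact ⟨hAd, hAI⟩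
    · rintro ⟨hAd, hAI⟩
      exact ⟨⟨le_of_eq hAd, hAI⟩, hAd⟩
  -- the finset version of ℬ
  set ℬF : Finset (Finset (Fin n)) := (Set.toFinite ℬ).toFinset with hℬFdef
  have hℬcoe : (↑ℬF : Set (Finset (Fin n))) = ℬ := Set.Finite.coe_toFinset _
  have hℬsized : (↑ℬF : Set (Finset (Fin n))).Sized d := by
    rw [hℬcoe]
    exact fun B hB => (hℬ B hB).2
  have hcards : #ℬF = #𝒜F := by
    rw [← Set.ncard_coe_finset, ← Set.ncard_coe_finset, hℬcoe, h𝒜coe]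
    exact hcardℬ
  -- the compressed chain
  obtain ⟨U, hUsized, hUcard, hUchain, hUmin⟩ := exists_upchain d D hDup
  -- assemble the compressed support family
  set D' : Finset (Finset (Fin n)) := (Finset.range (d + 1)).biUnion U with hD'def
  have hmemD' : ∀ S : Finset (Fin n), S ∈ D' ↔ ∃ e ≤ d, S ∈ U e := by
    intro S
    rw [hD'def, mem_biUnion]
    constructor
    · rintro ⟨e, he, hS⟩
      rw [Finset.mem_range] at he
      exact ⟨e, by omega, hS⟩
    · rintro ⟨e, he, hS⟩
      exact ⟨e, Finset.mem_range.2 (by omega), hS⟩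
  have hD'le : ∀ S ∈ D', #S ≤ d := by
    intro S hS
    obtain ⟨e, he, hSe⟩ := (hmemD' S).1 hS
    rw [hUsized e (mem_coe.2 hSe)]
    exact he
  have hD'up : ∀ S ∈ D', ∀ i, i ∉ S → #S < d → insert i S ∈ D' := by
    intro S hS i hi hlt
    obtain ⟨e, he, hSe⟩ := (hmemD' S).1 hS
    have hScard : #S = e := hUsized e (mem_coe.2 hSe)
    have hins : insert i S ∈ U (e + 1) := by
      apply hUchain e (by omega) S hSe
      · exact Finset.subset_insert i S
      · rw [card_insert_of_notMem hi]
    exact (hmemD' _).2 ⟨e + 1, by omega, hins⟩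
  have hD'strata : ∀ e, D'.filter (fun S => #S = e) = if e ≤ d then U e else ∅ := by
    intro e
    ext S
    rw [mem_filter, hmemD']
    split
    · next he =>
        constructor
        · rintro ⟨⟨e', _, hSe'⟩, hcard⟩
          have := hUsized e' (mem_coe.2 hSe')
          have : e' = e := by omega
          exact this ▸ hSe'
        · intro hS
          exact ⟨⟨e, he, hS⟩, hUsized e (mem_coe.2 hS)⟩
    · next he =>
        simp only [Finset.notMem_empty, iff_false]
        rintro ⟨⟨e', he', hSe'⟩, hcard⟩
        have := hUsized e' (mem_coe.2 hSe')
        omega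
  have hstrata_eq : ∀ e, #(D.filter fun S => #S = e) = #(D'.filter fun S => #S = e) := by
    intro e
    rw [hD'strata e]
    split
    · next => rw [hUcard e]
    · next he =>
        have : (D.filter fun S => #S = e) = ∅ := by
          rw [Finset.eq_empty_iff_forall_notMem]
          intro S hS
          rw [mem_filter] at hS
          have := hDle S hS.1
          omega
        rw [this]
  have hUd : D'.filter (fun S => #S = d) = U d := by
    rw [hD'strata d, if_pos (le_refl d)]
  -- linear algebra: compare shadows via the Gotzmann hypothesis
  have hIcomp := idealComponent_eq_span hI d D hmemD
  set W : Submodule k (MvPolynomial (Fin n) k) :=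
    Submodule.span k ((fun s => monomial s (1 : k)) '' ((↑(monF D' d) : Set (Fin n →₀ ℕ)))) with hWdef
  have hWhom : W ≤ homogeneousSubmodule (Fin n) k d := by
    rw [hWdef, Submodule.span_le]
    rintro p ⟨t, ht, rfl⟩
    rw [mem_coe, mem_monF] at ht
    rw [SetLike.mem_coe, mem_homogeneousSubmodule]
    exact isHomogeneous_monomial 1 ht.1
  have hrank : Module.finrank k W = Module.finrank k (idealComponent k I d) := by
    rw [hWdef, hIcomp, finrank_span_monomial_image, finrank_span_monomial_image]
    exact (monF_card_eq d D' D (fun e => (hstrata_eq e).symm))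
  have hGot := (hG d).2 W hWhom hrank
  -- compute both sides
  have hL : Module.finrank k (mulVars k (idealComponent k I d))
      = #(monF D (d + 1)) + #(∂⁺ 𝒜F) := by
    rw [hIcomp, mulVars_span_monomial, finrank_span_monomial_image]
    rw [shF_card d D hDle ?hup]
    case hup =>
      intro S hS i hi hlt
      apply hDup S hS (insert i S) (Finset.subset_insert i S)
      · rw [card_insert_of_notMem hi]
      · rw [card_insert_of_notMem hi]
        omega
  have hR : Module.finrank k (mulVars k W)
      = #(monF D' (d + 1)) + #(∂⁺ (U d)) := by
    rw [hWdef, mulVars_span_monomial, finrank_span_monomial_image]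
    rw [shF_card d D' hD'le hD'up, hUd]
  have hjunk : #(monF D (d + 1)) = #(monF D' (d + 1)) :=
    monF_card_eq (d + 1) D D' hstrata_eq
  have hshadow𝒜 : #(∂⁺ 𝒜F) ≤ #(∂⁺ (U d)) := by
    omega
  -- Kruskal–Katona minimality
  have hUmin' := hUmin ℬF hℬsized (by rw [hUcard d, ← h𝒜Fdef, hcards])
  rw [upShadow_inst_eq _ (instDecidableEqFin n)] at hUmin'
  -- final translation to `upShadowIn`
  have htrans : ∀ 𝒞 : Finset (Finset (Fin n)),
      upShadowIn (Finset.univ : Finset (Fin n)) (↑𝒞 : Set (Finset (Fin n)))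
        = (↑(∂⁺ 𝒞) : Set (Finset (Fin n))) := by
    intro 𝒞
    ext B
    rw [upShadowIn, Set.mem_setOf_eq, mem_coe, mem_upShadow_iff]
    constructor
    · rintro ⟨A, hA, x, _, hxA, rfl⟩
      exact ⟨A, mem_coe.1 hA, x, hxA, rfl⟩
    · rintro ⟨s, hs, a, ha, rfl⟩
      exact ⟨s, mem_coe.2 hs, a, Finset.mem_univ a, ha, rfl⟩
  rw [← h𝒜coe, ← hℬcoe, htrans 𝒜F, htrans ℬF, Set.ncard_coe_finset, Set.ncard_coe_finset]
  omega
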